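/- For every p ∈ ℝ³ with p ≠ 0 one has the matrix identity (M⁻·p)² = 4|p|² P₊(p); consequently, for every f ∈ D(M⁻·p̂) one has the norm equality ∫ |p|² |P₊(p) f̂(p)|² dp = (1/4) ∫ |(M⁻·p) f̂(p)|² dp, i.e. ‖ −i∇(P₊ f) ‖ = ‖ (1/2)(M⁻·p̂) f ‖ (up to the normalization of the Fourier transform). -/

import Mathlib

noncomputable section
open MeasureTheory Matrix Complex Filter Topology
open scoped Kronecker ENNReal InnerProductSpace RealInnerProductSpace

/-- Pauli matrices -/
def σ1 : Matrix (Fin 2) (Fin 2) ℂ := !![0, 1; 1, 0]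
def σ2 : Matrix (Fin 2) (Fin 2) ℂ := !![0, -I; I, 0]
def σ3 : Matrix (Fin 2) (Fin 2) ℂ := !![1, 0; 0, -1]

/-- Dirac alpha matrices in standard representation -/
def diracAlpha' (s : Matrix (Fin 2) (Fin 2) ℂ) : Matrix (Fin 4) (Fin 4) ℂ :=
  Matrix.reindex finSumFinEquiv finSumFinEquiv (Matrix.fromBlocks 0 s s 0)

def diracAlpha : Fin 3 → Matrix (Fin 4) (Fin 4) ℂ
  | 0 => diracAlpha' σ1
  | 1 => diracAlpha' σ2
  | 2 => diracAlpha' σ3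

def diracBeta : Matrix (Fin 4) (Fin 4) ℂ :=
  Matrix.reindex finSumFinEquiv finSumFinEquiv
    (Matrix.fromBlocks (1 : Matrix (Fin 2) (Fin 2) ℂ) 0 0 (-1 : Matrix (Fin 2) (Fin 2) ℂ))

abbrev R3 := EuclideanSpace ℝ (Fin 3)
abbrev C16 := EuclideanSpace ℂ (Fin 16)

/-- α·p -/
def alphaDot (p : R3) : Matrix (Fin 4) (Fin 4) ℂ :=
  ∑ j : Fin 3, (p j : ℂ) • diracAlpha j

/-- reindexing 4×4 Kronecker products to 16×16 matrices -/
def kron16 (A B : Matrix (Fin 4) (Fin 4) ℂ) : Matrix (Fin 16) (Fin 16) ℂ :=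
  Matrix.reindex finProdFinEquiv finProdFinEquiv (A ⊗ₖ B)

/-- M⁻·p -/
def Mminus (p : R3) : Matrix (Fin 16) (Fin 16) ℂ :=
  kron16 (alphaDot p) 1 - kron16 1 (alphaDot p)

/-- P·M⁺ -/
def MplusDot (P : R3) : Matrix (Fin 16) (Fin 16) ℂ :=
  (2⁻¹ : ℂ) • (kron16 (alphaDot P) 1 + kron16 1 (alphaDot P))

/-- τ(p) -/
def tau (p : R3) : Matrix (Fin 16) (Fin 16) ℂ :=
  -((‖p‖ ^ 2 : ℝ) : ℂ)⁻¹ • kron16 (alphaDot p) (alphaDot p)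

def Pplus (p : R3) : Matrix (Fin 16) (Fin 16) ℂ := (2⁻¹ : ℂ) • (1 + tau p)
def Pminus (p : R3) : Matrix (Fin 16) (Fin 16) ℂ := (2⁻¹ : ℂ) • (1 - tau p)

def Bmat : Matrix (Fin 16) (Fin 16) ℂ := (2 : ℂ) • kron16 diracBeta diracBeta

/- ### Auxiliary lemmas -/

lemma dA0 : diracAlpha 0 = !![0,0,0,1; 0,0,1,0; 0,1,0,0; 1,0,0,0] := by
  ext i j; fin_cases i <;> fin_cases j <;> rfl
lemma dA1 : diracAlpha 1 = !![0,0,0,-I; 0,0,I,0; 0,-I,0,0; I,0,0,0] := by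
  ext i j; fin_cases i <;> fin_cases j <;> rfl
lemma dA2 : diracAlpha 2 = !![0,0,1,0; 0,0,0,-1; 1,0,0,0; 0,-1,0,0] := by
  ext i j; fin_cases i <;> fin_cases j <;> rfl

lemma alphaDot_eq (p : R3) : alphaDot p =
  !![0,0,(p 2:ℂ), (p 0:ℂ) - (p 1:ℂ)*I;
     0,0,(p 0:ℂ) + (p 1:ℂ)*I, -(p 2:ℂ);
     (p 2:ℂ), (p 0:ℂ) - (p 1:ℂ)*I, 0, 0;
     (p 0:ℂ)+(p 1:ℂ)*I, -(p 2:ℂ), 0, 0] := by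
  rw [alphaDot, Fin.sum_univ_three, dA0, dA1, dA2]
  ext i j
  fin_cases i <;> fin_cases j <;> simp [Matrix.vecHead, Matrix.vecTail] <;> ring

lemma norm_sq_eq' (p : R3) : (‖p‖^2 : ℝ) = p 0 ^2 + p 1 ^2 + p 2 ^2 := by
  rw [EuclideanSpace.norm_eq, Real.sq_sqrt (by positivity)]
  simp [Fin.sum_univ_three, sq_abs, Real.norm_eq_abs]

lemma alphaDot_sq (p : R3) : alphaDot p * alphaDot p = ((‖p‖^2 : ℝ) : ℂ) • 1 := by
  rw [alphaDot_eq, norm_sq_eq']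
  ext i j
  fin_cases i <;> fin_cases j <;>
    · simp [Matrix.mul_apply, Fin.sum_univ_four, Matrix.one_apply, Matrix.vecHead, Matrix.vecTail]
      try push_cast
      try ring_nf
      try simp [Complex.I_sq]
      try ring

lemma alphaDot_herm (p : R3) : (alphaDot p)ᴴ = alphaDot p := by
  rw [alphaDot_eq]
  ext i j
  fin_cases i <;> fin_cases j <;>
    · simp [Matrix.conjTranspose_apply, Complex.conj_ofReal, Matrix.vecHead, Matrix.vecTail]
      try ring

lemma kron16_mul (A B C D : Matrix (Fin 4) (Fin 4) ℂ) :
    kron16 A B * kron16 C D = kron16 (A*C) (B*D) := by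
  simp [kron16, Matrix.reindex_apply, Matrix.submatrix_mul_equiv, Matrix.mul_kronecker_mul]

lemma kron16_one : kron16 1 1 = (1 : Matrix (Fin 16) (Fin 16) ℂ) := by
  simp [kron16, Matrix.one_kronecker_one, Matrix.reindex_apply, Matrix.submatrix_one_equiv]

lemma kron16_smul_left (c : ℂ) (A B : Matrix (Fin 4) (Fin 4) ℂ) :
    kron16 (c • A) B = c • kron16 A B := by
  ext i j; simp [kron16, Matrix.smul_kronecker]

lemma kron16_smul_right (c : ℂ) (A B : Matrix (Fin 4) (Fin 4) ℂ) :
    kron16 A (c • B) = c • kron16 A B := by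
  ext i j; simp [kron16, Matrix.kronecker_smul]

lemma kron16_conjTranspose (A B : Matrix (Fin 4) (Fin 4) ℂ) :
    (kron16 A B)ᴴ = kron16 Aᴴ Bᴴ := by
  ext i j
  simp [kron16, Matrix.conjTranspose_apply, Matrix.kroneckerMap_apply, star_mul', mul_comm]

lemma kron16_zero_left (B : Matrix (Fin 4) (Fin 4) ℂ) : kron16 0 B = 0 := by
  ext i j; simp [kron16, Matrix.kroneckerMap_apply]
lemma kron16_zero_right (A : Matrix (Fin 4) (Fin 4) ℂ) : kron16 A 0 = 0 := by
  ext i j; simp [kron16, Matrix.kroneckerMap_apply]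

lemma normsq_ne_zero {p : R3} (hp : p ≠ 0) : ((‖p‖^2 : ℝ) : ℂ) ≠ 0 := by
  simp only [ne_eq, Complex.ofReal_eq_zero, pow_eq_zero_iff, norm_eq_zero]
  simpa using hp

/-- Part 1 : the matrix identity. -/
lemma Mminus_sq (p : R3) (hp : p ≠ 0) :
    Mminus p * Mminus p = ((4 * ‖p‖ ^ 2 : ℝ) : ℂ) • Pplus p := by
  have hc := normsq_ne_zero hp
  have hP : ((4 * ‖p‖ ^ 2 : ℝ) : ℂ) • Pplus p
      = (2 * ((‖p‖^2:ℝ):ℂ)) • (1 : Matrix (Fin 16) (Fin 16) ℂ)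
        - (2:ℂ) • kron16 (alphaDot p) (alphaDot p) := by
    rw [Pplus, tau, smul_smul, smul_add, smul_smul]
    rw [show ((4 * ‖p‖ ^ 2 : ℝ) : ℂ) * 2⁻¹ = 2 * ((‖p‖^2:ℝ):ℂ) by push_cast; ring]
    rw [show 2 * ((‖p‖^2:ℝ):ℂ) * -((‖p‖^2:ℝ):ℂ)⁻¹ = -2 by
      rw [mul_neg, mul_assoc, mul_inv_cancel₀ hc, mul_one]]
    rw [neg_smul, ← sub_eq_add_neg]
  rw [hP, Mminus, sub_mul, mul_sub, mul_sub, kron16_mul, kron16_mul, kron16_mul, kron16_mul]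
  simp only [one_mul, mul_one]
  rw [alphaDot_sq, kron16_smul_left, kron16_smul_right, kron16_one]
  module

lemma Mminus_herm (p : R3) : (Mminus p)ᴴ = Mminus p := by
  rw [Mminus, Matrix.conjTranspose_sub, kron16_conjTranspose, kron16_conjTranspose,
    alphaDot_herm, Matrix.conjTranspose_one]

lemma tau_herm (p : R3) : (tau p)ᴴ = tau p := by
  rw [tau, Matrix.conjTranspose_smul, kron16_conjTranspose, alphaDot_herm]
  congr 1
  simp [← Complex.ofReal_inv, Complex.conj_ofReal]

lemma Pplus_herm (p : R3) : (Pplus p)ᴴ = Pplus p := by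
  rw [Pplus, Matrix.conjTranspose_smul, Matrix.conjTranspose_add, tau_herm,
    Matrix.conjTranspose_one]
  norm_num

lemma inv_sq_helper {c : ℂ} (hc : c ≠ 0) : -c⁻¹ * -c⁻¹ * c * c = 1 := by
  rw [neg_mul_neg]
  calc c⁻¹ * c⁻¹ * c * c = (c * c⁻¹) * (c * c⁻¹) := by ring
    _ = 1 := by rw [mul_inv_cancel₀ hc, mul_one]

lemma tau_sq (p : R3) (hp : p ≠ 0) : tau p * tau p = 1 := by
  have hc := normsq_ne_zero hp
  rw [tau, Matrix.smul_mul, Matrix.mul_smul, smul_smul, kron16_mul, alphaDot_sq,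
    kron16_smul_left, kron16_smul_right, kron16_one, smul_smul, smul_smul]
  convert one_smul ℂ (1 : Matrix (Fin 16) (Fin 16) ℂ) using 2
  exact inv_sq_helper hc

lemma Pplus_idem (p : R3) (hp : p ≠ 0) : Pplus p * Pplus p = Pplus p := by
  rw [Pplus, Matrix.smul_mul, Matrix.mul_smul, smul_smul, add_mul, mul_add, mul_add,
    one_mul, mul_one, tau_sq p hp]
  rw [show (2⁻¹ : ℂ) * 2⁻¹ = 4⁻¹ by norm_num]
  ext i j
  simp [Matrix.add_apply, Matrix.smul_apply]
  ring

/-- the pointwise norm identity -/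
lemma pointwise (p : R3) (x : C16) :
    ‖p‖ ^ 2 * ‖Matrix.toEuclideanLin (Pplus p) x‖ ^ 2
      = (1 / 4) * ‖Matrix.toEuclideanLin (Mminus p) x‖ ^ 2 := by
  by_cases hp : p = 0
  · subst hp
    have hA : alphaDot (0 : R3) = 0 := by
      rw [alphaDot_eq]
      ext i j
      fin_cases i <;> fin_cases j <;> simp [Matrix.vecHead, Matrix.vecTail]
    have hM : Mminus (0 : R3) = 0 := by
      rw [Mminus, hA, kron16_zero_left, kron16_zero_right, sub_zero]
    rw [hM]
    simp
  · -- the hermitian/adjoint computation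
    have hadj : ∀ (A : Matrix (Fin 16) (Fin 16) ℂ) (y z : C16),
        ⟪(Matrix.toEuclideanLin A) y, z⟫_ℂ = ⟪y, (Matrix.toEuclideanLin Aᴴ) z⟫_ℂ := by
      intro A y z
      rw [Matrix.toEuclideanLin_conjTranspose_eq_adjoint]
      exact (LinearMap.adjoint_inner_right _ _ _).symm
    have hmul : ∀ (A B : Matrix (Fin 16) (Fin 16) ℂ) (y : C16),
        Matrix.toEuclideanLin (A * B) y
          = Matrix.toEuclideanLin A (Matrix.toEuclideanLin B y) := by
      intro A B y
      simp [Matrix.toEuclideanLin_apply, Matrix.mulVec_mulVec]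
    set T := fun (A : Matrix (Fin 16) (Fin 16) ℂ) => Matrix.toEuclideanLin A with hT
    have key : ⟪T (Mminus p) x, T (Mminus p) x⟫_ℂ
        = ((4 * ‖p‖ ^ 2 : ℝ) : ℂ) * ⟪T (Pplus p) x, T (Pplus p) x⟫_ℂ := by
      calc ⟪T (Mminus p) x, T (Mminus p) x⟫_ℂ
          = ⟪x, T (Mminus p * Mminus p) x⟫_ℂ := by
            rw [hadj, Mminus_herm, hmul]
        _ = ((4 * ‖p‖ ^ 2 : ℝ) : ℂ) * ⟪x, T (Pplus p) x⟫_ℂ := by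
            rw [Mminus_sq p hp]
            have : T (((4 * ‖p‖ ^ 2 : ℝ) : ℂ) • Pplus p) x
                = ((4 * ‖p‖ ^ 2 : ℝ) : ℂ) • T (Pplus p) x := by
              simp [hT]
            rw [this, inner_smul_right]
        _ = ((4 * ‖p‖ ^ 2 : ℝ) : ℂ) * ⟪T (Pplus p) x, T (Pplus p) x⟫_ℂ := by
            rw [hadj, Pplus_herm, ← hmul, Pplus_idem p hp]
    have hre : ∀ y : C16, ‖y‖ ^ 2 = (⟪y, y⟫_ℂ).re := by
      intro y
      rw [@norm_sq_eq_re_inner ℂ]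
      simp [RCLike.re_to_complex]
    have key' : ‖T (Mminus p) x‖ ^ 2 = (4 * ‖p‖ ^ 2) * ‖T (Pplus p) x‖ ^ 2 := by
      rw [hre, hre, key, Complex.re_ofReal_mul]
    rw [key']
    ring

/-- STATEMENT 6 -/
theorem stmt6 :
    (∀ p : R3, p ≠ 0 → Mminus p * Mminus p = ((4 * ‖p‖ ^ 2 : ℝ) : ℂ) • Pplus p) ∧
    ∀ g : R3 → C16, MeasureTheory.MemLp g 2 volume →
      MeasureTheory.MemLp (fun p => Matrix.toEuclideanLin (Mminus p) (g p)) 2 volume →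
      ∫ p : R3, ‖p‖ ^ 2 * ‖Matrix.toEuclideanLin (Pplus p) (g p)‖ ^ 2
        = (1 / 4) * ∫ p : R3, ‖Matrix.toEuclideanLin (Mminus p) (g p)‖ ^ 2 := by
  constructor
  · exact Mminus_sq
  · intro g _ _
    have : ∀ p : R3, ‖p‖ ^ 2 * ‖Matrix.toEuclideanLin (Pplus p) (g p)‖ ^ 2
        = (1 / 4) * ‖Matrix.toEuclideanLin (Mminus p) (g p)‖ ^ 2 := fun p => pointwise p (g p)
    calc ∫ p : R3, ‖p‖ ^ 2 * ‖Matrix.toEuclideanLin (Pplus p) (g p)‖ ^ 2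
        = ∫ p : R3, (1 / 4) * ‖Matrix.toEuclideanLin (Mminus p) (g p)‖ ^ 2 := by
          exact integral_congr_ae (Filter.Eventually.of_forall this)
      _ = (1 / 4) * ∫ p : R3, ‖Matrix.toEuclideanLin (Mminus p) (g p)‖ ^ 2 :=
          integral_const_mul _ _
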